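/- Embed Γ_{n,m} = Γ_n × 𝔖_m into Γ_{n+m}, with Γ_n the wreath product on the first n letters and 𝔖_m permuting the last m letters with trivial root-of-unity components, and embed Γ_{n+m−1} into Γ_{n+m} as the subgroup of elements fixing the letter n+m with trivial root-of-unity component in slot n+m. Then: (1) the ℓ+1 elements γ_{n+m} (γ ∈ μ_ℓ) and s_{n,n+m} form a complete set of representatives of pairwise distinct double cosets in Γ_{n+m−1}\Γ_{n+m}/Γ_{n,m}; (2) for x = γ_{n+m} one has x·Γ_{n,m}·x^{−1} ∩ Γ_{n+m−1} = Γ_{n,m−1} (= Γ_n × 𝔖_{m−1} acting on the letters n+1,…,n+m−1); (3) for x = s_{n,n+m} one has x·Γ_{n,m}·x^{−1} ∩ Γ_{n+m−1} = Γ_{n−1,m} (= Γ_{n−1} × 𝔖_m, with 𝔖_m acting on the letters n,…,n+m−1). -/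

import Mathlib

/- Statement 7: double cosets `Γ_{n+m-1} \ Γ_{n+m} / Γ_{n,m}` and intersections of
conjugates, inside the wreath product `Γ_{n+m} = 𝔖_{n+m} ⋉ μ_ℓ^{n+m}`. -/

noncomputable section

/-- The permutation automorphism of `Fin k → G` given by `σ`, i.e. `f ↦ f ∘ σ⁻¹`. -/
def permAut (G : Type*) [Group G] (k : ℕ) (σ : Equiv.Perm (Fin k)) : MulAut (Fin k → G) where
  toFun f := f ∘ σ.symm
  invFun f := f ∘ σ
  left_inv f := by funext i; simp
  right_inv f := by funext i; simp
  map_mul' f g := rfl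

/-- The action of `𝔖_k` on `G^k` by permutation of the coordinates. -/
def permHom (G : Type*) [Group G] (k : ℕ) : Equiv.Perm (Fin k) →* MulAut (Fin k → G) where
  toFun := permAut G k
  map_one' := MulEquiv.ext fun _ => rfl
  map_mul' _ _ := MulEquiv.ext fun _ => rfl

/-- The wreath product `Γ_k = 𝔖_k ⋉ μ_ℓ^k`. -/
abbrev WreathGamma (ℓ k : ℕ) : Type :=
  (Fin k → rootsOfUnity ℓ ℂ) ⋊[permHom (rootsOfUnity ℓ ℂ) k] Equiv.Perm (Fin k)

namespace St7

@[simp] lemma permHom_apply {G : Type*} [Group G] {k : ℕ} (σ : Equiv.Perm (Fin k))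
    (f : Fin k → G) (i : Fin k) : permHom G k σ f i = f (σ⁻¹ i) := rfl

lemma perm_inv_lt {k n : ℕ} (σ : Equiv.Perm (Fin k))
    (h : ∀ i : Fin k, (i : ℕ) < n → ((σ i : Fin k) : ℕ) < n) :
    ∀ i : Fin k, (i : ℕ) < n → ((σ⁻¹ i : Fin k) : ℕ) < n := by
  classical
  set s : Finset (Fin k) := Finset.univ.filter (fun i => (i : ℕ) < n) with hs
  have hmem : ∀ i : Fin k, i ∈ s ↔ (i : ℕ) < n := by
    intro i; simp [hs]
  have himg : s.image σ = s := by
    apply Finset.eq_of_subset_of_card_le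
    · intro j hj
      obtain ⟨i, hi, rfl⟩ := Finset.mem_image.1 hj
      exact (hmem _).2 (h i ((hmem _).1 hi))
    · rw [Finset.card_image_of_injective _ σ.injective]
  intro i hi
  have : i ∈ s.image σ := by rw [himg]; exact (hmem _).2 hi
  obtain ⟨j, hj, hji⟩ := Finset.mem_image.1 this
  have : σ⁻¹ i = j := by rw [← hji]; simp
  rw [this]; exact (hmem _).1 hj

lemma perm_ge {k n : ℕ} (σ : Equiv.Perm (Fin k))
    (h : ∀ i : Fin k, (i : ℕ) < n → ((σ i : Fin k) : ℕ) < n) :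
    ∀ i : Fin k, n ≤ (i : ℕ) → n ≤ ((σ i : Fin k) : ℕ) := by
  intro i hi
  by_contra h'
  push_neg at h'
  have := perm_inv_lt σ h (σ i) h'
  simp at this
  omega

/-- A generic "block" subgroup of the wreath product. -/
def blockSG (ℓ k : ℕ) (T : Set (Fin k)) (Q : Set (Equiv.Perm (Fin k)))
    (hQ1 : (1 : Equiv.Perm (Fin k)) ∈ Q)
    (hQm : ∀ {σ τ : Equiv.Perm (Fin k)}, σ ∈ Q → τ ∈ Q → σ * τ ∈ Q)
    (hQi : ∀ {σ : Equiv.Perm (Fin k)}, σ ∈ Q → σ⁻¹ ∈ Q)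
    (hQT : ∀ σ ∈ Q, ∀ i ∈ T, σ i ∈ T) : Subgroup (WreathGamma ℓ k) where
  carrier := {x | (∀ i ∈ T, x.left i = 1) ∧ x.right ∈ Q}
  one_mem' := ⟨fun i _ => rfl, hQ1⟩
  mul_mem' := by
    rintro x y ⟨hx1, hx2⟩ ⟨hy1, hy2⟩
    refine ⟨fun i hi => ?_, hQm hx2 hy2⟩
    have hT : x.right⁻¹ i ∈ T := hQT _ (hQi hx2) i hi
    simp only [SemidirectProduct.mul_left, Pi.mul_apply, permHom_apply]
    rw [hx1 i hi, hy1 _ hT, one_mul]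
  inv_mem' := by
    rintro x ⟨hx1, hx2⟩
    refine ⟨fun i hi => ?_, hQi hx2⟩
    have hT : x.right i ∈ T := hQT _ hx2 i hi
    simp only [SemidirectProduct.inv_left, SemidirectProduct.inv_right, permHom_apply,
      Pi.inv_apply, inv_inv]
    rw [hx1 _ hT, inv_one]

lemma mem_blockSG {ℓ k : ℕ} {T : Set (Fin k)} {Q : Set (Equiv.Perm (Fin k))}
    {h1 hm hi hT} {x : WreathGamma ℓ k} :
    x ∈ blockSG ℓ k T Q h1 hm hi hT ↔ (∀ i ∈ T, x.left i = 1) ∧ x.right ∈ Q := Iff.rfl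

/-- `Γ_{k-1}`-style subgroup: fixes letter `p`, trivial root component at `p`. -/
def sgA (ℓ k : ℕ) (p : Fin k) : Subgroup (WreathGamma ℓ k) :=
  blockSG ℓ k {p} {σ | σ p = p}
    rfl
    (fun hσ hτ => by simp only [Set.mem_setOf_eq, Equiv.Perm.mul_apply] at *; rw [hτ, hσ])
    (fun {σ} hσ => by
      simp only [Set.mem_setOf_eq] at *
      nth_rewrite 1 [← hσ]; exact σ.symm_apply_apply p)
    (fun σ hσ i hi => by
      simp only [Set.mem_singleton_iff] at hi ⊢
      rw [hi]; exact hσ)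

lemma mem_sgA {ℓ k : ℕ} {p : Fin k} {x : WreathGamma ℓ k} :
    x ∈ sgA ℓ k p ↔ x.left p = 1 ∧ x.right p = p := by
  refine (mem_blockSG).trans ?_
  simp

/-- `Γ_{n,m}`-style subgroup. -/
def sgB (ℓ k n : ℕ) : Subgroup (WreathGamma ℓ k) :=
  blockSG ℓ k {i | n ≤ (i : ℕ)} {σ | ∀ i : Fin k, (i : ℕ) < n → ((σ i : Fin k) : ℕ) < n}
    (fun i hi => by simpa using hi)
    (fun {σ τ} hσ hτ i hi => by
      simp only [Equiv.Perm.mul_apply]; exact hσ _ (hτ _ hi))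
    (fun {σ} hσ => perm_inv_lt σ hσ)
    (fun σ hσ i hi => perm_ge σ hσ i hi)

lemma mem_sgB {ℓ k n : ℕ} {x : WreathGamma ℓ k} :
    x ∈ sgB ℓ k n ↔ (∀ i : Fin k, (i : ℕ) < n → ((x.right i : Fin k) : ℕ) < n) ∧
      (∀ i : Fin k, n ≤ (i : ℕ) → x.left i = 1) := by
  rw [sgB, mem_blockSG]
  exact ⟨fun h => ⟨h.2, h.1⟩, fun h => ⟨h.2, h.1⟩⟩

/-- `Γ_{n,m-1}`-style subgroup (also used for `Γ_{n-1,m}` with `n-1`). -/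
def sgC (ℓ k n : ℕ) (p : Fin k) : Subgroup (WreathGamma ℓ k) :=
  blockSG ℓ k {i | n ≤ (i : ℕ)}
    ({σ | ∀ i : Fin k, (i : ℕ) < n → ((σ i : Fin k) : ℕ) < n} ∩ {σ | σ p = p})
    ⟨fun i hi => by simpa using hi, rfl⟩
    (fun {σ τ} hσ hτ => ⟨fun i hi => by
        simp only [Equiv.Perm.mul_apply]; exact hσ.1 _ (hτ.1 _ hi),
      by simp only [Set.mem_setOf_eq, Equiv.Perm.mul_apply] at *; rw [hτ.2, hσ.2]⟩)
    (fun {σ} hσ => ⟨perm_inv_lt σ hσ.1, by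
      have h2 := hσ.2
      simp only [Set.mem_setOf_eq] at h2 ⊢
      nth_rewrite 1 [← h2]; exact σ.symm_apply_apply p⟩)
    (fun σ hσ i hi => perm_ge σ hσ.1 i hi)

lemma mem_sgC {ℓ k n : ℕ} {p : Fin k} {x : WreathGamma ℓ k} :
    x ∈ sgC ℓ k n p ↔ (∀ i : Fin k, (i : ℕ) < n → ((x.right i : Fin k) : ℕ) < n) ∧
      x.right p = p ∧ (∀ i : Fin k, n ≤ (i : ℕ) → x.left i = 1) := by
  refine (mem_blockSG).trans ?_
  exact ⟨fun h => ⟨h.2.1, h.2.2, h.1⟩, fun h => ⟨h.2.2, h.1, h.2.1⟩⟩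

lemma closureA (ℓ k : ℕ) (p : Fin k) :
    Subgroup.closure {x : WreathGamma ℓ k |
        ∃ (γ : Fin k → rootsOfUnity ℓ ℂ) (σ : Equiv.Perm (Fin k)),
          σ p = p ∧ γ p = 1 ∧ x = ⟨γ, σ⟩} = sgA ℓ k p := by
  have : {x : WreathGamma ℓ k |
        ∃ (γ : Fin k → rootsOfUnity ℓ ℂ) (σ : Equiv.Perm (Fin k)),
          σ p = p ∧ γ p = 1 ∧ x = ⟨γ, σ⟩} = (sgA ℓ k p : Set (WreathGamma ℓ k)) := by
    ext x
    simp only [Set.mem_setOf_eq, SetLike.mem_coe, mem_sgA]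
    constructor
    · rintro ⟨γ, σ, h1, h2, rfl⟩; exact ⟨h2, h1⟩
    · rintro ⟨h1, h2⟩; exact ⟨x.left, x.right, h2, h1, rfl⟩
  rw [this, Subgroup.closure_eq]

lemma closureB (ℓ k n : ℕ) :
    Subgroup.closure {x : WreathGamma ℓ k |
        ∃ (γ : Fin k → rootsOfUnity ℓ ℂ) (σ : Equiv.Perm (Fin k)),
          (∀ i : Fin k, (i : ℕ) < n → ((σ i : Fin k) : ℕ) < n) ∧
          (∀ i : Fin k, n ≤ (i : ℕ) → γ i = 1) ∧ x = ⟨γ, σ⟩} = sgB ℓ k n := by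
  have : {x : WreathGamma ℓ k |
        ∃ (γ : Fin k → rootsOfUnity ℓ ℂ) (σ : Equiv.Perm (Fin k)),
          (∀ i : Fin k, (i : ℕ) < n → ((σ i : Fin k) : ℕ) < n) ∧
          (∀ i : Fin k, n ≤ (i : ℕ) → γ i = 1) ∧ x = ⟨γ, σ⟩} =
      (sgB ℓ k n : Set (WreathGamma ℓ k)) := by
    ext x
    simp only [Set.mem_setOf_eq, SetLike.mem_coe, mem_sgB]
    constructor
    · rintro ⟨γ, σ, h1, h2, rfl⟩; exact ⟨h1, h2⟩
    · rintro ⟨h1, h2⟩; exact ⟨x.left, x.right, h1, h2, rfl⟩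
  rw [this, Subgroup.closure_eq]

lemma closureC (ℓ k n : ℕ) (p : Fin k) :
    Subgroup.closure {x : WreathGamma ℓ k |
        ∃ (γ : Fin k → rootsOfUnity ℓ ℂ) (σ : Equiv.Perm (Fin k)),
          (∀ i : Fin k, (i : ℕ) < n → ((σ i : Fin k) : ℕ) < n) ∧
          σ p = p ∧
          (∀ i : Fin k, n ≤ (i : ℕ) → γ i = 1) ∧ x = ⟨γ, σ⟩} = sgC ℓ k n p := by
  have : {x : WreathGamma ℓ k |
        ∃ (γ : Fin k → rootsOfUnity ℓ ℂ) (σ : Equiv.Perm (Fin k)),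
          (∀ i : Fin k, (i : ℕ) < n → ((σ i : Fin k) : ℕ) < n) ∧
          σ p = p ∧
          (∀ i : Fin k, n ≤ (i : ℕ) → γ i = 1) ∧ x = ⟨γ, σ⟩} =
      (sgC ℓ k n p : Set (WreathGamma ℓ k)) := by
    ext x
    simp only [Set.mem_setOf_eq, SetLike.mem_coe, mem_sgC]
    constructor
    · rintro ⟨γ, σ, h1, h2, h3, rfl⟩; exact ⟨h1, h2, h3⟩
    · rintro ⟨h1, h2, h3⟩; exact ⟨x.left, x.right, h1, h2, h3, rfl⟩
  rw [this, Subgroup.closure_eq]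

lemma doset_invariant {ℓ k n : ℕ} {p : Fin k} {x w : WreathGamma ℓ k}
    (hw : w ∈ DoubleCoset.doubleCoset x ((sgA ℓ k p : Subgroup (WreathGamma ℓ k)) : Set (WreathGamma ℓ k))
      (sgB ℓ k n)) :
    ((n ≤ ((w.right⁻¹ p : Fin k) : ℕ)) ↔ n ≤ ((x.right⁻¹ p : Fin k) : ℕ)) ∧
    (n ≤ ((x.right⁻¹ p : Fin k) : ℕ) → w.left p = x.left p) := by
  obtain ⟨a, ha, b, hb, rfl⟩ := DoubleCoset.mem_doubleCoset.1 hw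
  rw [SetLike.mem_coe, mem_sgA] at ha
  rw [SetLike.mem_coe, mem_sgB] at hb
  obtain ⟨ha1, ha2⟩ := ha
  obtain ⟨hb1, hb2⟩ := hb
  have hainv : a.right⁻¹ p = p := by
    nth_rewrite 1 [← ha2]; exact a.right.symm_apply_apply p
  have hr : (a * x * b).right⁻¹ p = b.right⁻¹ (x.right⁻¹ p) := by
    simp only [SemidirectProduct.mul_right, mul_inv_rev, Equiv.Perm.mul_apply, hainv]
  constructor
  · rw [hr]
    constructor
    · intro h
      by_contra h'
      push_neg at h'
      have := perm_inv_lt b.right hb1 (x.right⁻¹ p) h'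
      omega
    · exact perm_ge _ (perm_inv_lt _ hb1) _
  · intro hx
    have hl : (a * x * b).left p =
        a.left p * (x.left (a.right⁻¹ p) * b.left (x.right⁻¹ (a.right⁻¹ p))) := by
      simp only [SemidirectProduct.mul_left, SemidirectProduct.mul_right, Pi.mul_apply,
        permHom_apply, mul_inv_rev, Equiv.Perm.mul_apply, mul_assoc]
    rw [hl, hainv, ha1, one_mul, hb2 _ hx, mul_one]

lemma sdp_ext {N G : Type*} [Group N] [Group G] {φ : G →* MulAut N}
    {a b : N ⋊[φ] G} (h1 : a.left = b.left) (h2 : a.right = b.right) : a = b := by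
  cases a; cases b
  simp only at h1 h2
  subst h1; subst h2; rfl

lemma mk3 {ℓ k : ℕ} (α δ β : Fin k → rootsOfUnity ℓ ℂ) (τ π ρ : Equiv.Perm (Fin k)) :
    (⟨α, τ⟩ : WreathGamma ℓ k) * ⟨δ, π⟩ * ⟨β, ρ⟩ =
      ⟨α * permHom _ _ τ δ * permHom _ _ (τ * π) β, τ * π * ρ⟩ := rfl

lemma eq_mk_iff {ℓ k : ℕ} {w : WreathGamma ℓ k} {L : Fin k → rootsOfUnity ℓ ℂ}
    {R : Equiv.Perm (Fin k)} : w = (⟨L, R⟩ : WreathGamma ℓ k) ↔ w.left = L ∧ w.right = R := by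
  constructor
  · rintro rfl; exact ⟨rfl, rfl⟩
  · rintro ⟨h1, h2⟩; exact sdp_ext h1 h2

end St7

theorem statement_7 (ℓ n m : ℕ) (hℓ : 1 ≤ ℓ) (hn : 1 ≤ n) (hm : 1 ≤ m)
    -- 0-indexed positions of the letters `n+m` and `n`
    (lastI nIdx : Fin (n + m)) (hlastI : (lastI : ℕ) = n + m - 1) (hnIdx : (nIdx : ℕ) = n - 1)
    -- `A = Γ_{n+m-1}`: elements fixing the letter `n+m`, with trivial root-of-unity
    -- component in slot `n+m`
    (A : Subgroup (WreathGamma ℓ (n + m)))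
    (hA : A = Subgroup.closure
      {x : WreathGamma ℓ (n + m) |
        ∃ (γ : Fin (n + m) → rootsOfUnity ℓ ℂ) (σ : Equiv.Perm (Fin (n + m))),
          σ lastI = lastI ∧ γ lastI = 1 ∧ x = ⟨γ, σ⟩})
    -- `B = Γ_{n,m} = Γ_n × 𝔖_m`
    (B : Subgroup (WreathGamma ℓ (n + m)))
    (hB : B = Subgroup.closure
      {x : WreathGamma ℓ (n + m) |
        ∃ (γ : Fin (n + m) → rootsOfUnity ℓ ℂ) (σ : Equiv.Perm (Fin (n + m))),
          (∀ i : Fin (n + m), (i : ℕ) < n → ((σ i : Fin (n + m)) : ℕ) < n) ∧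
          (∀ i : Fin (n + m), n ≤ (i : ℕ) → γ i = 1) ∧ x = ⟨γ, σ⟩})
    -- `Γ_{n,m-1} = Γ_n × 𝔖_{m-1}`, with `𝔖_{m-1}` acting on the letters `n+1, …, n+m-1`
    (Gnm1 : Subgroup (WreathGamma ℓ (n + m)))
    (hGnm1 : Gnm1 = Subgroup.closure
      {x : WreathGamma ℓ (n + m) |
        ∃ (γ : Fin (n + m) → rootsOfUnity ℓ ℂ) (σ : Equiv.Perm (Fin (n + m))),
          (∀ i : Fin (n + m), (i : ℕ) < n → ((σ i : Fin (n + m)) : ℕ) < n) ∧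
          σ lastI = lastI ∧
          (∀ i : Fin (n + m), n ≤ (i : ℕ) → γ i = 1) ∧ x = ⟨γ, σ⟩})
    -- `Γ_{n-1,m} = Γ_{n-1} × 𝔖_m`, with `𝔖_m` acting on the letters `n, …, n+m-1`
    (Gn1m : Subgroup (WreathGamma ℓ (n + m)))
    (hGn1m : Gn1m = Subgroup.closure
      {x : WreathGamma ℓ (n + m) |
        ∃ (γ : Fin (n + m) → rootsOfUnity ℓ ℂ) (σ : Equiv.Perm (Fin (n + m))),
          (∀ i : Fin (n + m), (i : ℕ) < n - 1 → ((σ i : Fin (n + m)) : ℕ) < n - 1) ∧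
          σ lastI = lastI ∧
          (∀ i : Fin (n + m), n - 1 ≤ (i : ℕ) → γ i = 1) ∧ x = ⟨γ, σ⟩})
    -- the elements `γ_{n+m}` (for `γ ∈ μ_ℓ`) and `s_{n,n+m}`
    (xg : rootsOfUnity ℓ ℂ → WreathGamma ℓ (n + m))
    (hxg : ∀ γ, xg γ = SemidirectProduct.inl (Pi.mulSingle lastI γ))
    (xs : WreathGamma ℓ (n + m))
    (hxs : xs = SemidirectProduct.inr (Equiv.swap nIdx lastI)) :
    -- (1) completeness of the set of double coset representatives
    (∀ w : WreathGamma ℓ (n + m),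
      (∃ γ : rootsOfUnity ℓ ℂ, w ∈ DoubleCoset.doubleCoset (xg γ) (A : Set (WreathGamma ℓ (n + m))) B) ∨
        w ∈ DoubleCoset.doubleCoset xs (A : Set (WreathGamma ℓ (n + m))) B) ∧
    -- (1') pairwise distinctness of the `ℓ+1` double cosets
    (∀ γ γ' : rootsOfUnity ℓ ℂ,
      DoubleCoset.doubleCoset (xg γ) (A : Set (WreathGamma ℓ (n + m))) B =
        DoubleCoset.doubleCoset (xg γ') (A : Set (WreathGamma ℓ (n + m))) B → γ = γ') ∧
    (∀ γ : rootsOfUnity ℓ ℂ,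
      DoubleCoset.doubleCoset (xg γ) (A : Set (WreathGamma ℓ (n + m))) B ≠
        DoubleCoset.doubleCoset xs (A : Set (WreathGamma ℓ (n + m))) B) ∧
    -- (2) `γ_{n+m}·Γ_{n,m}·γ_{n+m}⁻¹ ∩ Γ_{n+m-1} = Γ_{n,m-1}`
    (∀ γ : rootsOfUnity ℓ ℂ,
      Subgroup.map (MulAut.conj (xg γ)).toMonoidHom B ⊓ A = Gnm1) ∧
    -- (3) `s_{n,n+m}·Γ_{n,m}·s_{n,n+m}⁻¹ ∩ Γ_{n+m-1} = Γ_{n-1,m}`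
    (Subgroup.map (MulAut.conj xs).toMonoidHom B ⊓ A = Gn1m) := by
  classical
  rw [St7.closureA] at hA
  rw [St7.closureB] at hB
  rw [St7.closureC] at hGnm1
  rw [St7.closureC] at hGn1m
  subst hA; subst hB; subst hGnm1; subst hGn1m
  have hlast : n ≤ (lastI : ℕ) := by omega
  have hnlt : (nIdx : ℕ) < n := by omega
  refine ⟨?_, ?_, ?_, ?_, ?_⟩
  -- (1) completeness
  · intro w
    by_cases hq : n ≤ ((w.right⁻¹ lastI : Fin (n + m)) : ℕ)
    · left
      refine ⟨w.left lastI, ?_⟩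
      set q : Fin (n + m) := w.right⁻¹ lastI with hqdef
      set γ₀ := w.left lastI with hγ₀
      set ρ : Equiv.Perm (Fin (n + m)) := Equiv.swap q lastI with hρ
      set τ : Equiv.Perm (Fin (n + m)) := w.right * ρ with hτdef
      set δ : Fin (n + m) → rootsOfUnity ℓ ℂ := Pi.mulSingle lastI γ₀ with hδ
      have hτl : τ lastI = lastI := by
        rw [hτdef, Equiv.Perm.mul_apply, hρ, Equiv.swap_apply_right, hqdef,
          ← Equiv.Perm.mul_apply, mul_inv_cancel, Equiv.Perm.one_apply]
      have hτl' : τ⁻¹ lastI = lastI := by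
        nth_rewrite 1 [← hτl]; exact τ.symm_apply_apply lastI
      refine DoubleCoset.mem_doubleCoset.2
        ⟨⟨w.left * (permHom _ _ τ δ)⁻¹, τ⟩, ?_, ⟨1, ρ⟩, ?_, ?_⟩
      · rw [SetLike.mem_coe, St7.mem_sgA]
        refine ⟨?_, hτl⟩
        show (w.left * (permHom _ _ τ δ)⁻¹) lastI = 1
        simp only [Pi.mul_apply, Pi.inv_apply, St7.permHom_apply, hτl']
        rw [hδ, Pi.mulSingle_eq_same, hγ₀, mul_inv_cancel]
      · rw [SetLike.mem_coe, St7.mem_sgB]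
        refine ⟨fun i hi => ?_, fun i hi => rfl⟩
        show ((ρ i : Fin (n + m)) : ℕ) < n
        rw [hρ, Equiv.swap_apply_of_ne_of_ne]
        · exact hi
        · exact fun h => by have := congrArg Fin.val h; omega
        · exact fun h => by have := congrArg Fin.val h; omega
      · have hxg' : xg γ₀ = (⟨δ, 1⟩ : WreathGamma ℓ (n + m)) := by rw [hxg]; rfl
        rw [hxg', St7.mk3, St7.eq_mk_iff]
        constructor
        · simp only [map_one, MulAut.one_apply]
          rw [mul_one, inv_mul_cancel_right]
        · rw [hτdef, hρ, mul_one, mul_assoc, Equiv.swap_mul_self, mul_one]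
    · right
      push_neg at hq
      set q : Fin (n + m) := w.right⁻¹ lastI with hqdef
      set s : Equiv.Perm (Fin (n + m)) := Equiv.swap nIdx lastI with hsdef
      have hsinv : s⁻¹ = s := Equiv.swap_inv nIdx lastI
      set ρ : Equiv.Perm (Fin (n + m)) := Equiv.swap q nIdx with hρ
      set τ : Equiv.Perm (Fin (n + m)) := w.right * ρ * s with hτdef
      set β : Fin (n + m) → rootsOfUnity ℓ ℂ := Pi.mulSingle nIdx (w.left lastI) with hβ
      have hτl : τ lastI = lastI := by
        rw [hτdef]
        simp only [Equiv.Perm.mul_apply]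
        rw [hsdef, Equiv.swap_apply_right, hρ, Equiv.swap_apply_right, hqdef,
          ← Equiv.Perm.mul_apply, mul_inv_cancel, Equiv.Perm.one_apply]
      have hτl' : τ⁻¹ lastI = lastI := by
        nth_rewrite 1 [← hτl]; exact τ.symm_apply_apply lastI
      have h8 : (τ * s)⁻¹ lastI = nIdx := by
        rw [mul_inv_rev, Equiv.Perm.mul_apply, hτl', hsinv, hsdef, Equiv.swap_apply_right]
      refine DoubleCoset.mem_doubleCoset.2
        ⟨⟨w.left * (permHom _ _ (τ * s) β)⁻¹, τ⟩, ?_, ⟨β, ρ⟩, ?_, ?_⟩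
      · rw [SetLike.mem_coe, St7.mem_sgA]
        refine ⟨?_, hτl⟩
        show (w.left * (permHom _ _ (τ * s) β)⁻¹) lastI = 1
        simp only [Pi.mul_apply, Pi.inv_apply, St7.permHom_apply, h8]
        rw [hβ, Pi.mulSingle_eq_same, mul_inv_cancel]
      · rw [SetLike.mem_coe, St7.mem_sgB]
        constructor
        · intro i hi
          show ((ρ i : Fin (n + m)) : ℕ) < n
          rw [hρ, Equiv.swap_apply_def]
          split_ifs <;> omega
        · intro i hi
          show β i = 1
          rw [hβ]
          exact Pi.mulSingle_eq_of_ne (fun h => by have := congrArg Fin.val h; omega) _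
      · have hxs' : xs = (⟨1, s⟩ : WreathGamma ℓ (n + m)) := by rw [hxs]; rfl
        rw [hxs', St7.mk3, St7.eq_mk_iff]
        constructor
        · simp only [map_one, MulAut.one_apply]
          rw [mul_one, inv_mul_cancel_right]
        · have hss : s * s = 1 := by rw [hsdef]; exact Equiv.swap_mul_self _ _
          have hρρ : Equiv.swap q nIdx * Equiv.swap q nIdx = 1 := Equiv.swap_mul_self _ _
          rw [hτdef, hρ]
          simp only [mul_assoc]
          rw [← mul_assoc s s, hss, one_mul, hρρ, mul_one]
  -- (1') distinctness among the xg γ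
  · intro γ γ' h
    have hmem : xg γ ∈ DoubleCoset.doubleCoset (xg γ')
        ((St7.sgA ℓ (n + m) lastI : Subgroup _) : Set (WreathGamma ℓ (n + m)))
        (St7.sgB ℓ (n + m) n) := by
      rw [← h]; exact DoubleCoset.mem_doubleCoset_self _ _ _
    have hinv := St7.doset_invariant hmem
    have h0 : ((xg γ').right)⁻¹ lastI = lastI := by rw [hxg]; rfl
    have h2 := hinv.2 (by rw [h0]; exact hlast)
    rw [hxg, hxg] at h2
    simpa using h2
  -- (1') xg γ vs xs
  · intro γ h
    have hmem : xg γ ∈ DoubleCoset.doubleCoset xs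
        ((St7.sgA ℓ (n + m) lastI : Subgroup _) : Set (WreathGamma ℓ (n + m)))
        (St7.sgB ℓ (n + m) n) := by
      rw [← h]; exact DoubleCoset.mem_doubleCoset_self _ _ _
    have hinv := (St7.doset_invariant hmem).1
    have hgl : ((xg γ).right)⁻¹ lastI = lastI := by rw [hxg]; rfl
    have hsl : (xs.right)⁻¹ lastI = nIdx := by
      rw [hxs]
      show (Equiv.swap nIdx lastI)⁻¹ lastI = nIdx
      rw [Equiv.swap_inv, Equiv.swap_apply_right]
    rw [hgl, hsl] at hinv
    have := hinv.1 hlast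
    omega
  -- (2)
  · intro γ
    ext x
    rw [Subgroup.mem_inf, Subgroup.mem_map_equiv, MulAut.conj_symm_apply]
    have hR : ((xg γ)⁻¹ * x * xg γ).right = x.right := by
      rw [hxg]
      simp
    have hL : ∀ i, ((xg γ)⁻¹ * x * xg γ).left i =
        ((Pi.mulSingle lastI γ : Fin (n + m) → rootsOfUnity ℓ ℂ) i)⁻¹ * x.left i *
          (Pi.mulSingle lastI γ : Fin (n + m) → rootsOfUnity ℓ ℂ) (x.right⁻¹ i) := by
      intro i
      rw [hxg]
      simp [St7.permHom_apply, mul_assoc]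
    rw [St7.mem_sgB, St7.mem_sgA, St7.mem_sgC, hR]
    simp only [hL]
    have hinv : x.right lastI = lastI → ∀ i : Fin (n + m), i ≠ lastI →
        x.right⁻¹ i ≠ lastI := by
      intro h i hi hcon
      exact hi (by rw [← h, ← hcon, ← Equiv.Perm.mul_apply, mul_inv_cancel, Equiv.Perm.one_apply])
    constructor
    · rintro ⟨⟨hb1, hb2⟩, ha1, ha2⟩
      refine ⟨hb1, ha2, fun i hi => ?_⟩
      by_cases hil : i = lastI
      · rw [hil]; exact ha1
      · have h5 : (Pi.mulSingle lastI γ : Fin (n + m) → rootsOfUnity ℓ ℂ) i = 1 :=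
          by apply Pi.mulSingle_eq_of_ne hil
        have h6 : (Pi.mulSingle lastI γ : Fin (n + m) → rootsOfUnity ℓ ℂ) (x.right⁻¹ i) = 1 :=
          by apply Pi.mulSingle_eq_of_ne (hinv ha2 i hil)
        have h7 := hb2 i hi
        rw [h5, h6, inv_one, one_mul, mul_one] at h7
        exact h7
    · rintro ⟨hb1, ha2, hc⟩
      refine ⟨⟨hb1, fun i hi => ?_⟩, hc lastI hlast, ha2⟩
      by_cases hil : i = lastI
      · subst hil
        have h7 : x.right⁻¹ i = i := by
          nth_rewrite 1 [← ha2]; exact x.right.symm_apply_apply i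
        rw [h7, hc i hlast]
        simp
      · rw [hc i hi, Pi.mulSingle_eq_of_ne hil, Pi.mulSingle_eq_of_ne (hinv ha2 i hil),
          inv_one, one_mul, mul_one]
  -- (3)
  · ext x
    rw [Subgroup.mem_inf, Subgroup.mem_map_equiv, MulAut.conj_symm_apply]
    set s : Equiv.Perm (Fin (n + m)) := Equiv.swap nIdx lastI with hsdef
    have hsinv : s⁻¹ = s := Equiv.swap_inv nIdx lastI
    have hR : (xs⁻¹ * x * xs).right = s * x.right * s := by
      rw [hxs]
      simp only [SemidirectProduct.mul_right, SemidirectProduct.inv_right,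
        SemidirectProduct.right_inr, hsinv]
    have hL : ∀ i, (xs⁻¹ * x * xs).left i = x.left (s i) := by
      intro i
      rw [hxs]
      simp [St7.permHom_apply, hsinv]
    rw [St7.mem_sgB, St7.mem_sgA, St7.mem_sgC, hR]
    simp only [hL, Equiv.Perm.mul_apply]
    have hsnIdx : s nIdx = lastI := Equiv.swap_apply_left _ _
    have hslast : s lastI = nIdx := Equiv.swap_apply_right _ _
    have hsother : ∀ i : Fin (n + m), i ≠ nIdx → i ≠ lastI → s i = i :=
      fun i h1 h2 => Equiv.swap_apply_of_ne_of_ne h1 h2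
    constructor
    · rintro ⟨⟨hb1, hb2⟩, ha1, ha2⟩
      refine ⟨fun i hi => ?_, ha2, fun i hi => ?_⟩
      · have hi1 : i ≠ nIdx := fun h => by have := congrArg Fin.val h; omega
        have hi2 : i ≠ lastI := fun h => by have := congrArg Fin.val h; omega
        have h1 := hb1 i (by omega)
        rw [hsother i hi1 hi2] at h1
        have hxi_ne : x.right i ≠ lastI := fun h => hi2 (x.right.injective (h.trans ha2.symm))
        by_cases h2 : x.right i = nIdx
        · rw [h2, hsnIdx] at h1; omega
        · rw [hsother _ h2 hxi_ne] at h1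
          have h9 : ((x.right i : Fin (n + m)) : ℕ) ≠ (nIdx : ℕ) :=
            fun hv => h2 (Fin.ext hv)
          omega
      · rcases eq_or_ne i lastI with rfl | hil
        · exact ha1
        · by_cases h2 : i = nIdx
          · subst h2
            have h3 := hb2 lastI hlast
            rw [hslast] at h3
            exact h3
          · have hin : n ≤ (i : ℕ) := by
              have h9 : (i : ℕ) ≠ (nIdx : ℕ) := fun hv => h2 (Fin.ext hv)
              omega
            have h3 := hb2 i hin
            rw [hsother i h2 hil] at h3
            exact h3
    · rintro ⟨hb1, ha2, hc⟩
      have hxlast : x.left lastI = 1 := hc lastI (by omega)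
      refine ⟨⟨fun i hi => ?_, fun i hi => ?_⟩, hxlast, ha2⟩
      · by_cases h2 : i = nIdx
        · subst h2
          rw [hsnIdx, ha2, hslast]
          omega
        · have hi1 : (i : ℕ) < n - 1 := by
            have h9 : (i : ℕ) ≠ (nIdx : ℕ) := fun hv => h2 (Fin.ext hv)
            omega
          have hil : i ≠ lastI := fun h => by have := congrArg Fin.val h; omega
          rw [hsother i h2 hil]
          have h3 := hb1 i hi1
          have hnx1 : x.right i ≠ nIdx := fun h => by have := congrArg Fin.val h; omega
          have hnx2 : x.right i ≠ lastI := fun h => by have := congrArg Fin.val h; omega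
          rw [hsother _ hnx1 hnx2]
          omega
      · rcases eq_or_ne i lastI with rfl | hil
        · rw [hslast]; exact hc nIdx (by omega)
        · have h2 : i ≠ nIdx := fun h => by have := congrArg Fin.val h; omega
          rw [hsother i h2 hil]
          exact hc i (by omega)
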